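/- arXiv:0707.4213 — 3 statements merged into one kernel-verified Lean document; each statement's English description precedes it below -/
import Mathlib

section
/- Let n ≥ 1 and A = ℤ[x]/(x^{n+1}), B = A ⊗_ℤ A, and set ν = Σ_{i=0}^{n} x^i ⊗ x^{n−i} ∈ B. Then the annihilator of the element x ⊗ 1 − 1 ⊗ x in B equals the principal ideal of B generated by ν; that is, for z ∈ B one has (x ⊗ 1 − 1 ⊗ x)·z = 0 if and only if z = ν·w for some w ∈ B. -/
open Polynomial TensorProduct

noncomputable section

/-- `A = ℤ[x]/(x^{n+1})`, the truncated polynomial ring. -/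
abbrev A (n : ℕ) : Type := AdjoinRoot ((X : ℤ[X]) ^ (n + 1))

/-- `B = A ⊗_ℤ A`. -/
abbrev B (n : ℕ) : Type := A n ⊗[ℤ] A n

/-- The class of `X` in `A`, i.e. the element `x`. -/
abbrev xA (n : ℕ) : A n := AdjoinRoot.root _

/-- `ν = Σ_{i=0}^{n} x^i ⊗ x^{n−i} ∈ B`. -/
def nu (n : ℕ) : B n :=
  ∑ i ∈ Finset.range (n + 1), ((xA n) ^ i) ⊗ₜ[ℤ] ((xA n) ^ (n - i))

lemma xA_pow_eq_zero (n : ℕ) : (xA n) ^ (n + 1) = 0 := by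
  have h : AdjoinRoot.mk ((X : ℤ[X]) ^ (n+1)) ((X:ℤ[X])^(n+1)) = 0 := AdjoinRoot.mk_self
  rwa [map_pow, AdjoinRoot.mk_X] at h

def bA (n : ℕ) : Module.Basis (Fin (n+1)) ℤ (A n) :=
  ((AdjoinRoot.powerBasis' (monic_X_pow (n+1))).basis).reindex (finCongr (by simp))

lemma bA_apply (n : ℕ) (i : Fin (n+1)) : bA n i = (xA n) ^ (i : ℕ) := by
  rw [bA, Module.Basis.reindex_apply, PowerBasis.basis_eq_pow]
  simp

def bB (n : ℕ) : Module.Basis (Fin (n+1)) (A n) (B n) := (bA n).baseChange (A n)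

lemma smul_eq_mul_tmul (n : ℕ) (a : A n) (z : B n) : a • z = (a ⊗ₜ[ℤ] (1 : A n)) * z := by
  induction z using TensorProduct.induction_on with
  | zero => simp
  | tmul p q =>
      rw [Algebra.TensorProduct.tmul_mul_tmul, one_mul, TensorProduct.smul_tmul']
      rfl
  | add u v hu hv => simp [mul_add, hu, hv]

lemma mul_nu_eq_zero (n : ℕ) :
    ((xA n) ⊗ₜ[ℤ] (1 : A n) - (1 : A n) ⊗ₜ[ℤ] (xA n)) * nu n = 0 := by
  set f : ℕ → B n := fun i => ((xA n) ^ i) ⊗ₜ[ℤ] ((xA n) ^ (n + 1 - i)) with hf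
  have key : ∀ i ∈ Finset.range (n+1),
      ((xA n) ⊗ₜ[ℤ] (1 : A n) - (1 : A n) ⊗ₜ[ℤ] (xA n)) * (((xA n) ^ i) ⊗ₜ[ℤ] ((xA n) ^ (n - i)))
      = f (i+1) - f i := by
    intro i hi
    rw [Finset.mem_range] at hi
    rw [sub_mul, Algebra.TensorProduct.tmul_mul_tmul, Algebra.TensorProduct.tmul_mul_tmul,
      hf]
    have h1 : n + 1 - (i + 1) = n - i := by omega
    have h2 : n + 1 - i = (n - i) + 1 := by omega
    simp only [h1, h2, one_mul]
    rw [← pow_succ', ← pow_succ']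
  rw [nu, Finset.mul_sum, Finset.sum_congr rfl key, Finset.sum_range_sub f]
  have : f (n+1) = 0 := by simp [hf, xA_pow_eq_zero]
  have h0 : f 0 = 0 := by simp [hf, xA_pow_eq_zero]
  rw [this, h0, sub_zero]


/-- the annihilator of `x ⊗ 1 − 1 ⊗ x` in `B` is the principal ideal
generated by `ν`. -/
theorem stmt1 (n : ℕ) (hn : 1 ≤ n) (z : B n) :
    ((xA n) ⊗ₜ[ℤ] (1 : A n) - (1 : A n) ⊗ₜ[ℤ] (xA n)) * z = 0 ↔
      ∃ w : B n, z = nu n * w := by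
  constructor
  · intro h
    set c : Fin (n+1) → A n := fun j => (bB n).repr z j with hc
    have hnn : n < n + 1 := Nat.lt_succ_self n
    have hz : z = ∑ j : Fin (n+1), (c j) ⊗ₜ[ℤ] ((xA n) ^ (j:ℕ)) := by
      conv_lhs => rw [← (bB n).sum_repr z]
      refine Finset.sum_congr rfl fun j _ => ?_
      rw [bB, Module.Basis.baseChange_apply, bA_apply, TensorProduct.smul_tmul']
      rw [smul_eq_mul, mul_one]
      rfl
    -- from h : (x⊗1)z = (1⊗x)z
    have h2 : (xA n) • z = ((1:A n) ⊗ₜ[ℤ] (xA n)) * z := by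
      rw [smul_eq_mul_tmul]
      have := sub_eq_zero.mp (by rwa [sub_mul] at h)
      exact this
    have hrep : ∀ k : Fin (n+1),
        xA n * c k = ∑ j : Fin (n+1), ((bA n).repr ((xA n)^((j:ℕ)+1)) k) • c j := by
      intro k
      have e1 : (bB n).repr ((xA n) • z) k = xA n * c k := by
        rw [map_smul]; rfl
      have e2 : ((1:A n) ⊗ₜ[ℤ] (xA n)) * z
          = ∑ j : Fin (n+1), (c j) ⊗ₜ[ℤ] ((xA n) ^ ((j:ℕ)+1)) := by
        conv_lhs => rw [hz, Finset.mul_sum]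
        refine Finset.sum_congr rfl fun j _ => ?_
        rw [Algebra.TensorProduct.tmul_mul_tmul, one_mul, ← pow_succ']
      rw [← e1, h2, e2, map_sum]
      rw [Finsupp.finset_sum_apply]
      refine Finset.sum_congr rfl fun j _ => ?_
      rw [bB, Module.Basis.baseChange_repr_tmul]
    have hstep : ∀ j : ℕ, ∀ hj : j < n,
        c ⟨j, by omega⟩ = xA n * c ⟨j+1, by omega⟩ := by
      intro j hj
      have hk := hrep ⟨j+1, by omega⟩
      rw [Finset.sum_eq_single (⟨j, by omega⟩ : Fin (n+1))] at hk
      · rw [show ((xA n)^(((⟨j, by omega⟩ : Fin (n+1)):ℕ)+1)) = bA n ⟨j+1, by omega⟩ from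
          (bA_apply n ⟨j+1, by omega⟩).symm, Module.Basis.repr_self] at hk
        rw [Finsupp.single_apply] at hk
        simp only [if_pos, one_smul] at hk
        exact hk.symm
      · intro t _ ht
        by_cases htn : (t:ℕ) = n
        · have : (xA n)^((t:ℕ)+1) = 0 := by rw [htn]; exact xA_pow_eq_zero n
          rw [this]; simp
        · have htl : (t:ℕ)+1 < n+1 := by omega
          rw [show ((xA n)^((t:ℕ)+1)) = bA n ⟨(t:ℕ)+1, htl⟩ from (bA_apply n ⟨(t:ℕ)+1, htl⟩).symm,
            Module.Basis.repr_self, Finsupp.single_apply]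
          have hne : (⟨(t:ℕ)+1, htl⟩ : Fin (n+1)) ≠ ⟨j+1, by omega⟩ := by
            simp only [ne_eq, Fin.mk.injEq]
            intro hcon
            exact ht (by ext; simpa using hcon)
          rw [if_neg hne, zero_smul]
      · intro hmem; exact absurd (Finset.mem_univ _) hmem
    have hpow : ∀ m : ℕ, m ≤ n → c ⟨n - m, by omega⟩ = (xA n)^m * c ⟨n, hnn⟩ := by
      intro m
      induction m with
      | zero => intro _; simp
      | succ m ih =>
          intro hm
          have h1 : n - (m+1) < n := by omega
          have := hstep (n - (m+1)) h1
          rw [show (⟨n - (m+1) + 1, by omega⟩ : Fin (n+1)) = (⟨n - m, by omega⟩ : Fin (n+1))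
            from Fin.ext (by simp; omega)] at this
          rw [this, ih (by omega), ← mul_assoc, ← pow_succ']
    have hcj : ∀ j : Fin (n+1), c j = (xA n)^(n - (j:ℕ)) * c ⟨n, hnn⟩ := by
      intro j
      have := hpow (n - (j:ℕ)) (Nat.sub_le n j)
      rw [show (⟨n - (n - (j:ℕ)), by omega⟩ : Fin (n+1)) = j from by
        ext; simp; omega] at this
      exact this
    refine ⟨(c ⟨n, hnn⟩) ⊗ₜ[ℤ] (1 : A n), ?_⟩
    calc z = ∑ j : Fin (n+1), ((xA n)^(n - (j:ℕ)) * c ⟨n, hnn⟩) ⊗ₜ[ℤ] ((xA n) ^ (j:ℕ)) := by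
            rw [hz]; exact Finset.sum_congr rfl fun j _ => by rw [hcj j]
      _ = ∑ j ∈ Finset.range (n+1), ((xA n)^(n - j) * c ⟨n, hnn⟩) ⊗ₜ[ℤ] ((xA n) ^ j) :=
            Fin.sum_univ_eq_sum_range (fun j => ((xA n)^(n - j) * c ⟨n, hnn⟩) ⊗ₜ[ℤ] ((xA n) ^ j)) (n+1)
      _ = ∑ i ∈ Finset.range (n+1), ((xA n)^i * c ⟨n, hnn⟩) ⊗ₜ[ℤ] ((xA n) ^ (n - i)) := by
            rw [← Finset.sum_range_reflect (fun i => ((xA n)^i * c ⟨n, hnn⟩) ⊗ₜ[ℤ] ((xA n) ^ (n - i))) (n+1)]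
            refine Finset.sum_congr rfl fun j hj => ?_
            rw [Finset.mem_range] at hj
            have e1 : n + 1 - 1 - j = n - j := by omega
            have e2 : n - (n - j) = j := by omega
            rw [e1, e2]
      _ = nu n * ((c ⟨n, hnn⟩) ⊗ₜ[ℤ] (1 : A n)) := by
            rw [nu, Finset.sum_mul]
            refine Finset.sum_congr rfl fun i _ => ?_
            rw [Algebra.TensorProduct.tmul_mul_tmul, mul_one]
  · rintro ⟨w, rfl⟩
    rw [← mul_assoc, mul_nu_eq_zero, zero_mul]


end
end

section
/- Let R₁ = ℤ[x,u,t]/(x², u², ux, 2xt) with Δ₁ : R₁ → R₁ the additive map determined on the monomial basis by Δ₁(t^k) = 0, Δ₁(t^k x) = 0, and Δ₁(t^k u) = −(2k+1)·t^k for all k ≥ 0. Let R₂ = ℤ[a,b,v]/(a², b², ab, 2av) with Δ₂ : R₂ → R₂ the additive map determined on the monomial basis by Δ₂(v^k) = 0, Δ₂(v^k a) = 0, and Δ₂(v^k b) = (2k+1)·v^k + a·v^{k+1} for all k ≥ 0. Then there is no ring isomorphism Φ : R₁ → R₂ satisfying Φ ∘ Δ₁ = Δ₂ ∘ Φ with Φ(x)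 ∈ {a, −a}, Φ(u) ∈ {b, −b}, and Φ(t) ∈ {v, −v, v + av², −v + av²}. -/
open MvPolynomial

noncomputable section

/-- The ideal `(x², u², ux, 2xt)` of `ℤ[x,u,t]`, with `x = X 0`, `u = X 1`, `t = X 2`. -/
def I1 : Ideal (MvPolynomial (Fin 3) ℤ) :=
  Ideal.span {X 0 ^ 2, X 1 ^ 2, X 1 * X 0, 2 * X 0 * X 2}

/-- `R₁ = ℤ[x,u,t]/(x², u², ux, 2xt)`. -/
abbrev R1 : Type := MvPolynomial (Fin 3) ℤ ⧸ I1

def x1 : R1 := Ideal.Quotient.mk I1 (X 0)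
def u1 : R1 := Ideal.Quotient.mk I1 (X 1)
def t1 : R1 := Ideal.Quotient.mk I1 (X 2)

/-- The ideal `(a², b², ab, 2av)` of `ℤ[a,b,v]`, with `a = X 0`, `b = X 1`, `v = X 2`. -/
def I2 : Ideal (MvPolynomial (Fin 3) ℤ) :=
  Ideal.span {X 0 ^ 2, X 1 ^ 2, X 0 * X 1, 2 * X 0 * X 2}

/-- `R₂ = ℤ[a,b,v]/(a², b², ab, 2av)`. -/
abbrev R2 : Type := MvPolynomial (Fin 3) ℤ ⧸ I2

def a2 : R2 := Ideal.Quotient.mk I2 (X 0)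
def b2 : R2 := Ideal.Quotient.mk I2 (X 1)
def v2 : R2 := Ideal.Quotient.mk I2 (X 2)


section Aux

abbrev Saux : Type := DualNumber (ZMod 2)

lemma two_eq_zero_S : (2 : Saux) = 0 := by
  have h : (2 : Saux) = algebraMap (ZMod 2) Saux 2 := (map_ofNat _ 2).symm
  rw [h, show (2 : ZMod 2) = 0 by decide, map_zero]

def fpoly : MvPolynomial (Fin 3) ℤ →+* Saux :=
  (MvPolynomial.aeval (R := ℤ) ![DualNumber.eps, 0, 1]).toRingHom

lemma I2_le_ker : I2 ≤ RingHom.ker fpoly := by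
  rw [I2, Ideal.span_le]
  rintro p hp
  simp only [Set.mem_insert_iff, Set.mem_singleton_iff] at hp
  rcases hp with rfl | rfl | rfl | rfl <;>
    simp [fpoly, RingHom.mem_ker, sq, DualNumber.eps_mul_eps, two_eq_zero_S]

def gq : R2 →+* Saux := Ideal.Quotient.lift I2 fpoly (fun _ hp => I2_le_ker hp)

lemma gq_a2 : gq a2 = DualNumber.eps := by
  simp [gq, a2, fpoly]

lemma gq_v2 : gq v2 = 1 := by
  simp [gq, v2, fpoly]

lemma eps_ne_zero_S : (DualNumber.eps : Saux) ≠ 0 := by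
  intro h
  have h2 := congrArg TrivSqZeroExt.snd h
  rw [DualNumber.snd_eps, TrivSqZeroExt.snd_zero] at h2
  exact one_ne_zero h2

end Aux

set_option maxHeartbeats 2000000 in
set_option synthInstance.maxHeartbeats 1000000 in
/-- with `Δ₁` the additive map on `R₁` with `Δ₁(tᵏ) = 0`, `Δ₁(tᵏx) = 0`,
`Δ₁(tᵏu) = −(2k+1)·tᵏ`, and `Δ₂` the additive map on `R₂` with `Δ₂(vᵏ) = 0`,
`Δ₂(vᵏa) = 0`, `Δ₂(vᵏb) = (2k+1)·vᵏ + a·v^{k+1}`, there is no ring isomorphism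
`Φ : R₁ → R₂` with `Φ ∘ Δ₁ = Δ₂ ∘ Φ`, `Φ(x) ∈ {a, −a}`, `Φ(u) ∈ {b, −b}` and
`Φ(t) ∈ {v, −v, v + av², −v + av²}`. -/
theorem stmt16 (Δ₁ : R1 →+ R1) (Δ₂ : R2 →+ R2)
    (hΔ₁ : ∀ k : ℕ, Δ₁ (t1 ^ k) = 0 ∧ Δ₁ (t1 ^ k * x1) = 0 ∧
      Δ₁ (t1 ^ k * u1) = -((2 * (k : ℤ) + 1) • t1 ^ k))
    (hΔ₂ : ∀ k : ℕ, Δ₂ (v2 ^ k) = 0 ∧ Δ₂ (v2 ^ k * a2) = 0 ∧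
      Δ₂ (v2 ^ k * b2) = (2 * (k : ℤ) + 1) • v2 ^ k + a2 * v2 ^ (k + 1)) :
    ¬ ∃ Φ : R1 ≃+* R2,
        (∀ z : R1, Φ (Δ₁ z) = Δ₂ (Φ z)) ∧
        (Φ x1 = a2 ∨ Φ x1 = -a2) ∧
        (Φ u1 = b2 ∨ Φ u1 = -b2) ∧
        (Φ t1 = v2 ∨ Φ t1 = -v2 ∨ Φ t1 = v2 + a2 * v2 ^ 2 ∨ Φ t1 = -v2 + a2 * v2 ^ 2) := by
  rintro ⟨Φ, hcomm, -, hu, -⟩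
  -- Δ₁ u1 = -1
  have h1 : Δ₁ u1 = -1 := by
    have h := (hΔ₁ 0).2.2
    simpa using h
  -- Δ₂ b2 = 1 + a2 * v2
  have h2 : Δ₂ b2 = 1 + a2 * v2 := by
    have h := (hΔ₂ 0).2.2
    simpa using h
  have key := hcomm u1
  rw [h1, map_neg, map_one] at key
  -- key : -1 = Δ₂ (Φ u1)
  have heps : (DualNumber.eps : Saux) = 0 := by
    rcases hu with hu | hu
    · rw [hu, h2] at key
      have hg := congrArg gq key
      rw [map_neg, map_one, map_add, map_one, map_mul, gq_a2, gq_v2, mul_one] at hg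
      linear_combination -hg - two_eq_zero_S
    · rw [hu, map_neg, h2] at key
      have hg := congrArg gq key
      rw [map_neg, map_one, map_neg, map_add, map_one, map_mul, gq_a2, gq_v2, mul_one] at hg
      linear_combination hg
  exact eps_ne_zero_S heps

end
end

section
/- Let R₁ = ℤ[x,u,t]/(x², u², ux, 2xt) and R₂ = ℤ[a,b,v]/(a², b², ab, 2av). The assignment x ↦ a, u ↦ −b, t ↦ v extends to a ring isomorphism Φ : R₁ → R₂. Moreover, defining a parity grading on R₁ in which monomials t^k and t^k x are even and t^k u is odd (and correspondingly on R₂ with v^k, v^k a even and v^k b odd), and defining brackets on parity-homogeneous elements by {α,β}ᵢ = (−1)^{|α|}·Δᵢ(α·β) − (−1)^{|α|}·Δᵢ(α)·β − α·Δᵢ(β) (i = 1,2), where Δ₁ is the additive map with Δ₁(t^k) = Δ₁(t^k x) = 0 and Δ₁(t^k u) = −(2k+1)t^k, and Δ₂ is the additive map with Δ₂(v^k) = Δ₂(v^k a) = 0 and Δ₂(v^k b) = (2k+1)v^k + a v^{k+1}, the isomorphism Φ satisfies Φ({α,β}₁) = {Φ(α), Φ(β)}₂ for all parity-homogeneous α,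 β ∈ R₁. -/
open MvPolynomial

noncomputable section

/-- The even part of `R₁`: the additive subgroup generated by the monomials `tᵏ`, `tᵏx`. -/
def even1 : AddSubgroup R1 :=
  AddSubgroup.closure {z : R1 | ∃ k : ℕ, z = t1 ^ k ∨ z = t1 ^ k * x1}

/-- The odd part of `R₁`: the additive subgroup generated by the monomials `tᵏu`. -/
def odd1 : AddSubgroup R1 :=
  AddSubgroup.closure {z : R1 | ∃ k : ℕ, z = t1 ^ k * u1}

/-- The even part of `R₂`: the additive subgroup generated by the monomials `vᵏ`, `vᵏa`. -/
def even2 : AddSubgroup R2 :=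
  AddSubgroup.closure {z : R2 | ∃ k : ℕ, z = v2 ^ k ∨ z = v2 ^ k * a2}

/-- The odd part of `R₂`: the additive subgroup generated by the monomials `vᵏb`. -/
def odd2 : AddSubgroup R2 :=
  AddSubgroup.closure {z : R2 | ∃ k : ℕ, z = v2 ^ k * b2}

set_option synthInstance.maxHeartbeats 1000000
set_option maxHeartbeats 1000000

lemma hx2 : x1 * x1 = 0 := by
  rw [x1, ← map_mul, Ideal.Quotient.eq_zero_iff_mem, ← pow_two]
  exact Ideal.subset_span (by simp)
lemma hu2 : u1 * u1 = 0 := by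
  rw [u1, ← map_mul, Ideal.Quotient.eq_zero_iff_mem, ← pow_two]
  exact Ideal.subset_span (by simp)
lemma hux : u1 * x1 = 0 := by
  rw [u1, x1, ← map_mul, Ideal.Quotient.eq_zero_iff_mem]
  exact Ideal.subset_span (by simp)
lemma ha2 : a2 * a2 = 0 := by
  rw [a2, ← map_mul, Ideal.Quotient.eq_zero_iff_mem, ← pow_two]
  exact Ideal.subset_span (by simp)
lemma hb2 : b2 * b2 = 0 := by
  rw [b2, ← map_mul, Ideal.Quotient.eq_zero_iff_mem, ← pow_two]
  exact Ideal.subset_span (by simp)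
lemma hab : a2 * b2 = 0 := by
  rw [a2, b2, ← map_mul, Ideal.Quotient.eq_zero_iff_mem]
  exact Ideal.subset_span (by simp)
lemma hxt : 2 * (x1 * t1) = 0 := by
  have : ((Ideal.Quotient.mk I1) (2 * X 0 * X 2) : R1) = 0 := by
    rw [Ideal.Quotient.eq_zero_iff_mem]
    exact Ideal.subset_span (by simp)
  rw [map_mul, map_mul, map_ofNat] at this
  rw [← mul_assoc]; exact this
lemma hav : 2 * (a2 * v2) = 0 := by
  have : ((Ideal.Quotient.mk I2) (2 * X 0 * X 2) : R2) = 0 := by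
    rw [Ideal.Quotient.eq_zero_iff_mem]
    exact Ideal.subset_span (by simp)
  rw [map_mul, map_mul, map_ofNat] at this
  rw [← mul_assoc]; exact this

def f12 : MvPolynomial (Fin 3) ℤ →+* R2 :=
  eval₂Hom (Int.castRingHom R2) ![a2, -b2, v2]
def f21 : MvPolynomial (Fin 3) ℤ →+* R1 :=
  eval₂Hom (Int.castRingHom R1) ![x1, -u1, t1]

lemma f12_ker : I1 ≤ RingHom.ker f12 := by
  rw [I1, Ideal.span_le]
  rintro p (rfl | rfl | rfl | rfl) <;> rw [SetLike.mem_coe, RingHom.mem_ker] <;>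
    simp [f12, pow_two] <;>
    first
      | linear_combination ha2
      | linear_combination hb2
      | linear_combination -hab
      | linear_combination hav

lemma f21_ker : I2 ≤ RingHom.ker f21 := by
  rw [I2, Ideal.span_le]
  rintro p (rfl | rfl | rfl | rfl) <;> rw [SetLike.mem_coe, RingHom.mem_ker] <;>
    simp [f21, pow_two] <;>
    first
      | linear_combination hx2
      | linear_combination hu2
      | linear_combination -hux
      | linear_combination hxt

def g12 : R1 →+* R2 := Ideal.Quotient.lift I1 f12 fun _ h => f12_ker h
def g21 : R2 →+* R1 := Ideal.Quotient.lift I2 f21 fun _ h => f21_ker h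

lemma g12_x : g12 x1 = a2 := by simp [g12, x1, f12]
lemma g12_u : g12 u1 = -b2 := by simp [g12, u1, f12]
lemma g12_t : g12 t1 = v2 := by simp [g12, t1, f12]
lemma g21_a : g21 a2 = x1 := by simp [g21, a2, f21]
lemma g21_b : g21 b2 = -u1 := by simp [g21, b2, f21]
lemma g21_v : g21 v2 = t1 := by simp [g21, v2, f21]

def Phi : R1 ≃+* R2 := by
  refine RingEquiv.ofRingHom g12 g21 ?_ ?_
  · apply Ideal.Quotient.ringHom_ext
    apply MvPolynomial.ringHom_ext
    · intro r; simp
    · intro i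
      fin_cases i <;>
        simp only [RingHom.comp_apply, RingHom.id_apply, Fin.zero_eta, Fin.mk_one, Fin.isValue]
      · rw [← a2.eq_def, g21_a, g12_x]
      · rw [← b2.eq_def, g21_b, map_neg g12, g12_u, neg_neg]
      · rw [show ((Ideal.Quotient.mk I2) (X ⟨2, by norm_num⟩) : R2) = v2 from rfl, g21_v, g12_t]
  · apply Ideal.Quotient.ringHom_ext
    apply MvPolynomial.ringHom_ext
    · intro r; simp
    · intro i
      fin_cases i <;>
        simp only [RingHom.comp_apply, RingHom.id_apply, Fin.zero_eta, Fin.mk_one, Fin.isValue]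
      · rw [← x1.eq_def, g12_x, g21_a]
      · rw [← u1.eq_def, g12_u, map_neg g21, g21_b, neg_neg]
      · rw [show ((Ideal.Quotient.mk I1) (X ⟨2, by norm_num⟩) : R1) = t1 from rfl, g12_t, g21_v]

lemma Phi_x : Phi x1 = a2 := g12_x
lemma Phi_u : Phi u1 = -b2 := g12_u
lemma Phi_t : Phi t1 = v2 := g12_t
lemma Phi_t_pow (k : ℕ) : Phi (t1 ^ k) = v2 ^ k := by rw [map_pow, Phi_t]
lemma Phi_tx (k : ℕ) : Phi (t1 ^ k * x1) = v2 ^ k * a2 := by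
  rw [map_mul, Phi_t_pow, Phi_x]
lemma Phi_tu (k : ℕ) : Phi (t1 ^ k * u1) = -(v2 ^ k * b2) := by
  rw [map_mul, Phi_t_pow, Phi_u]; ring

lemma Phi_even {z : R1} (hz : z ∈ even1) : Phi z ∈ even2 := by
  unfold even1 at hz; unfold even2
  induction hz using AddSubgroup.closure_induction with
  | mem w hw =>
    obtain ⟨k, rfl | rfl⟩ := hw
    · exact AddSubgroup.subset_closure ⟨k, Or.inl (Phi_t_pow k)⟩
    · exact AddSubgroup.subset_closure ⟨k, Or.inr (Phi_tx k)⟩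
  | zero => simpa using zero_mem _
  | add a b _ _ iha ihb => rw [map_add]; exact add_mem iha ihb
  | neg a _ iha => rw [map_neg]; exact neg_mem iha

lemma Phi_odd {z : R1} (hz : z ∈ odd1) : Phi z ∈ odd2 := by
  unfold odd1 at hz; unfold odd2
  induction hz using AddSubgroup.closure_induction with
  | mem w hw =>
    obtain ⟨k, rfl⟩ := hw
    rw [Phi_tu]
    exact neg_mem (AddSubgroup.subset_closure ⟨k, rfl⟩)
  | zero => simpa using zero_mem _
  | add a b _ _ iha ihb => rw [map_add]; exact add_mem iha ihb
  | neg a _ iha => rw [map_neg]; exact neg_mem iha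

-- product normal forms in R1
lemma mul_tt (k l : ℕ) : t1 ^ k * t1 ^ l = t1 ^ (k + l) := (pow_add t1 k l).symm
lemma mul_t_tx (k l : ℕ) : t1 ^ k * (t1 ^ l * x1) = t1 ^ (k + l) * x1 := by
  rw [pow_add]; ring
lemma mul_tx_t (k l : ℕ) : t1 ^ k * x1 * t1 ^ l = t1 ^ (k + l) * x1 := by
  rw [pow_add]; ring
lemma mul_t_tu (k l : ℕ) : t1 ^ k * (t1 ^ l * u1) = t1 ^ (k + l) * u1 := by
  rw [pow_add]; ring
lemma mul_tu_t (k l : ℕ) : t1 ^ k * u1 * t1 ^ l = t1 ^ (k + l) * u1 := by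
  rw [pow_add]; ring
lemma mul_tx_tx (k l : ℕ) : t1 ^ k * x1 * (t1 ^ l * x1) = 0 := by
  linear_combination (t1 ^ k * t1 ^ l) * hx2
lemma mul_tx_tu (k l : ℕ) : t1 ^ k * x1 * (t1 ^ l * u1) = 0 := by
  linear_combination (t1 ^ k * t1 ^ l) * hux
lemma mul_tu_tx (k l : ℕ) : t1 ^ k * u1 * (t1 ^ l * x1) = 0 := by
  linear_combination (t1 ^ k * t1 ^ l) * hux
lemma mul_tu_tu (k l : ℕ) : t1 ^ k * u1 * (t1 ^ l * u1) = 0 := by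
  linear_combination (t1 ^ k * t1 ^ l) * hu2

-- product normal forms in R2
lemma mul_vv (k l : ℕ) : v2 ^ k * v2 ^ l = v2 ^ (k + l) := (pow_add v2 k l).symm
lemma mul_v_va (k l : ℕ) : v2 ^ k * (v2 ^ l * a2) = v2 ^ (k + l) * a2 := by
  rw [pow_add]; ring
lemma mul_va_v (k l : ℕ) : v2 ^ k * a2 * v2 ^ l = v2 ^ (k + l) * a2 := by
  rw [pow_add]; ring
lemma mul_v_vb (k l : ℕ) : v2 ^ k * -(v2 ^ l * b2) = -(v2 ^ (k + l) * b2) := by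
  rw [pow_add]; ring
lemma mul_vb_v (k l : ℕ) : -(v2 ^ k * b2) * v2 ^ l = -(v2 ^ (k + l) * b2) := by
  rw [pow_add]; ring
lemma mul_va_va (k l : ℕ) : v2 ^ k * a2 * (v2 ^ l * a2) = 0 := by
  linear_combination (v2 ^ k * v2 ^ l) * ha2
lemma mul_va_vb (k l : ℕ) : v2 ^ k * a2 * -(v2 ^ l * b2) = 0 := by
  linear_combination -(v2 ^ k * v2 ^ l) * hab
lemma mul_vb_va (k l : ℕ) : -(v2 ^ k * b2) * (v2 ^ l * a2) = 0 := by
  linear_combination -(v2 ^ k * v2 ^ l) * hab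
lemma mul_vb_vb (k l : ℕ) : -(v2 ^ k * b2) * -(v2 ^ l * b2) = 0 := by
  linear_combination (v2 ^ k * v2 ^ l) * hb2

/-- The even-degree Gerstenhaber bracket expression, as a biadditive map. -/
def brkOp {R : Type*} [CommRing R] (Δ : R →+ R) : R →+ R →+ R :=
  AddMonoidHom.mk'
    (fun α => AddMonoidHom.mk' (fun β => Δ (α * β) - Δ α * β - α * Δ β)
      (fun b c => by
        have e1 : Δ (α * (b + c)) = Δ (α * b) + Δ (α * c) := by
          rw [← map_add]; congr 1; ring
        have e2 : Δ (b + c) = Δ b + Δ c := map_add Δ b c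
        linear_combination e1 - α * e2))
    (fun a b => AddMonoidHom.ext fun c => by
      have e1 : Δ ((a + b) * c) = Δ (a * c) + Δ (b * c) := by
        rw [← map_add]; congr 1; ring
      have e2 : Δ (a + b) = Δ a + Δ b := map_add Δ a b
      simp only [AddMonoidHom.mk'_apply, AddMonoidHom.add_apply]
      linear_combination e1 - c * e2)

/-- The odd-degree Gerstenhaber bracket expression, as a biadditive map. -/
def brkOp2 {R : Type*} [CommRing R] (Δ : R →+ R) : R →+ R →+ R :=
  AddMonoidHom.mk'
    (fun α => AddMonoidHom.mk' (fun β => -Δ (α * β) + Δ α * β - α * Δ β)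
      (fun b c => by
        have e1 : Δ (α * (b + c)) = Δ (α * b) + Δ (α * c) := by
          rw [← map_add]; congr 1; ring
        have e2 : Δ (b + c) = Δ b + Δ c := map_add Δ b c
        first
          | linear_combination -e1 - α * e2
          | linear_combination -e1 + α * e2
          | linear_combination e1 - α * e2
          | linear_combination e1 + α * e2))
    (fun a b => AddMonoidHom.ext fun c => by
      have e1 : Δ ((a + b) * c) = Δ (a * c) + Δ (b * c) := by
        rw [← map_add]; congr 1; ring
      have e2 : Δ (a + b) = Δ a + Δ b := map_add Δ a b
      simp only [AddMonoidHom.mk'_apply, AddMonoidHom.add_apply]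
      first
        | linear_combination -e1 + c * e2
        | linear_combination -e1 - c * e2
        | linear_combination e1 + c * e2
        | linear_combination e1 - c * e2)

lemma brkOp_apply {R : Type*} [CommRing R] (Δ : R →+ R) (α β : R) :
    brkOp Δ α β = Δ (α * β) - Δ α * β - α * Δ β := rfl
lemma brkOp2_apply {R : Type*} [CommRing R] (Δ : R →+ R) (α β : R) :
    brkOp2 Δ α β = -Δ (α * β) + Δ α * β - α * Δ β := rfl

section brk
variable {Δ₁ : R1 →+ R1} {Δ₂ : R2 →+ R2}
variable (hΔ₁ : ∀ k : ℕ, Δ₁ (t1 ^ k) = 0 ∧ Δ₁ (t1 ^ k * x1) = 0 ∧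
      Δ₁ (t1 ^ k * u1) = -((2 * (k : ℤ) + 1) • t1 ^ k))
variable (hΔ₂ : ∀ k : ℕ, Δ₂ (v2 ^ k) = 0 ∧ Δ₂ (v2 ^ k * a2) = 0 ∧
      Δ₂ (v2 ^ k * b2) = (2 * (k : ℤ) + 1) • v2 ^ k + a2 * v2 ^ (k + 1))
include hΔ₁ hΔ₂

lemma brk_ee {α β : R1} (hα : α ∈ even1) (hβ : β ∈ even1) :
    Phi (brkOp Δ₁ α β) = brkOp Δ₂ (Phi α) (Phi β) := by
  unfold even1 at hα hβ
  induction hβ using AddSubgroup.closure_induction with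
  | mem w hw =>
    induction hα using AddSubgroup.closure_induction with
    | mem g hg =>
      simp only [brkOp_apply]
      obtain ⟨k, rfl | rfl⟩ := hg <;> obtain ⟨l, rfl | rfl⟩ := hw
      · simp only [mul_tt, (hΔ₁ (k + l)).1, (hΔ₁ k).1, (hΔ₁ l).1, Phi_t_pow, mul_vv,
          (hΔ₂ (k + l)).1, (hΔ₂ k).1, (hΔ₂ l).1]
        simp
      · simp only [mul_t_tx, (hΔ₁ (k + l)).2.1, (hΔ₁ k).1, (hΔ₁ l).2.1, Phi_t_pow, Phi_tx,
          mul_v_va, (hΔ₂ (k + l)).2.1, (hΔ₂ k).1, (hΔ₂ l).2.1]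
        simp
      · simp only [mul_tx_t, (hΔ₁ (k + l)).2.1, (hΔ₁ k).2.1, (hΔ₁ l).1, Phi_t_pow, Phi_tx,
          mul_va_v, (hΔ₂ (k + l)).2.1, (hΔ₂ k).2.1, (hΔ₂ l).1]
        simp
      · simp only [mul_tx_tx, map_zero, (hΔ₁ k).2.1, (hΔ₁ l).2.1, Phi_tx, mul_va_va,
          (hΔ₂ k).2.1, (hΔ₂ l).2.1]
        simp
    | zero =>
      rw [map_zero (brkOp Δ₁), AddMonoidHom.zero_apply, map_zero Phi,
        map_zero (brkOp Δ₂), AddMonoidHom.zero_apply]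
    | add a b _ _ iha ihb =>
      rw [map_add (brkOp Δ₁), AddMonoidHom.add_apply, map_add Phi, iha, ihb, map_add Phi,
        map_add (brkOp Δ₂), AddMonoidHom.add_apply]
    | neg a _ iha =>
      rw [map_neg (brkOp Δ₁), AddMonoidHom.neg_apply, map_neg Phi, iha, map_neg Phi,
        map_neg (brkOp Δ₂), AddMonoidHom.neg_apply]
  | zero =>
    rw [map_zero (brkOp Δ₁ α), map_zero Phi, map_zero (brkOp Δ₂ (Phi α))]
  | add x y _ _ ihx ihy =>
    rw [map_add (brkOp Δ₁ α), map_add Phi, ihx, ihy, map_add Phi, map_add (brkOp Δ₂ (Phi α))]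
  | neg x _ ihx =>
    rw [map_neg (brkOp Δ₁ α), map_neg Phi, ihx, map_neg Phi, map_neg (brkOp Δ₂ (Phi α))]

lemma brk_eo {α β : R1} (hα : α ∈ even1) (hβ : β ∈ odd1) :
    Phi (brkOp Δ₁ α β) = brkOp Δ₂ (Phi α) (Phi β) := by
  unfold even1 at hα; unfold odd1 at hβ
  induction hβ using AddSubgroup.closure_induction with
  | mem w hw =>
    induction hα using AddSubgroup.closure_induction with
    | mem g hg =>
      simp only [brkOp_apply]
      obtain ⟨k, rfl | rfl⟩ := hg <;> obtain ⟨l, rfl⟩ := hw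
      · rw [mul_t_tu, (hΔ₁ (k + l)).2.2, (hΔ₁ k).1, (hΔ₁ l).2.2, Phi_t_pow, Phi_tu,
          mul_v_vb, map_neg Δ₂, map_neg Δ₂, (hΔ₂ (k + l)).2.2, (hΔ₂ l).2.2]
        simp only [zsmul_eq_mul, map_sub, map_neg, map_mul, map_zero, zero_mul, mul_zero,
          map_intCast, Phi_t_pow, (hΔ₂ k).1]
        push_cast
        ring
      · rw [mul_tx_tu, map_zero, (hΔ₁ k).2.1, (hΔ₁ l).2.2, Phi_tx, Phi_tu, mul_va_vb,
          map_zero, map_neg Δ₂, (hΔ₂ k).2.1, (hΔ₂ l).2.2]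
        simp only [zsmul_eq_mul, map_sub, map_neg, map_mul, map_zero, zero_mul, mul_zero,
          map_intCast, Phi_t_pow, map_pow, Phi_t, Phi_x]
        push_cast
        first
          | linear_combination (v2 ^ k * v2 ^ (l + 1)) * ha2
          | linear_combination -(v2 ^ k * v2 ^ (l + 1)) * ha2
          | linear_combination (2 * v2 ^ k * v2 ^ (l + 1)) * ha2
          | linear_combination -(2 * v2 ^ k * v2 ^ (l + 1)) * ha2
    | zero =>
      rw [map_zero (brkOp Δ₁), AddMonoidHom.zero_apply, map_zero Phi,
        map_zero (brkOp Δ₂), AddMonoidHom.zero_apply]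
    | add a b _ _ iha ihb =>
      rw [map_add (brkOp Δ₁), AddMonoidHom.add_apply, map_add Phi, iha, ihb, map_add Phi,
        map_add (brkOp Δ₂), AddMonoidHom.add_apply]
    | neg a _ iha =>
      rw [map_neg (brkOp Δ₁), AddMonoidHom.neg_apply, map_neg Phi, iha, map_neg Phi,
        map_neg (brkOp Δ₂), AddMonoidHom.neg_apply]
  | zero =>
    rw [map_zero (brkOp Δ₁ α), map_zero Phi, map_zero (brkOp Δ₂ (Phi α))]
  | add x y _ _ ihx ihy =>
    rw [map_add (brkOp Δ₁ α), map_add Phi, ihx, ihy, map_add Phi, map_add (brkOp Δ₂ (Phi α))]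
  | neg x _ ihx =>
    rw [map_neg (brkOp Δ₁ α), map_neg Phi, ihx, map_neg Phi, map_neg (brkOp Δ₂ (Phi α))]

lemma brk_oe {α β : R1} (hα : α ∈ odd1) (hβ : β ∈ even1) :
    Phi (brkOp2 Δ₁ α β) = brkOp2 Δ₂ (Phi α) (Phi β) := by
  unfold odd1 at hα; unfold even1 at hβ
  induction hβ using AddSubgroup.closure_induction with
  | mem w hw =>
    induction hα using AddSubgroup.closure_induction with
    | mem g hg =>
      simp only [brkOp2_apply]
      obtain ⟨k, rfl⟩ := hg <;> obtain ⟨l, rfl | rfl⟩ := hw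
      · rw [mul_tu_t, (hΔ₁ (k + l)).2.2, (hΔ₁ k).2.2, (hΔ₁ l).1, Phi_tu, Phi_t_pow,
          mul_vb_v, map_neg Δ₂, map_neg Δ₂, (hΔ₂ (k + l)).2.2, (hΔ₂ k).2.2]
        simp only [zsmul_eq_mul, map_add, map_sub, map_neg, map_mul, mul_zero, zero_mul,
          map_zero, map_intCast, Phi_t_pow, (hΔ₂ l).1]
        push_cast
        ring
      · rw [mul_tu_tx, map_zero, (hΔ₁ k).2.2, (hΔ₁ l).2.1, Phi_tu, Phi_tx, mul_vb_va,
          map_zero, map_neg Δ₂, (hΔ₂ k).2.2, (hΔ₂ l).2.1]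
        simp only [zsmul_eq_mul, map_add, map_sub, map_neg, map_mul, mul_zero, zero_mul,
          map_zero, map_intCast, Phi_t_pow, map_pow, Phi_t, Phi_x]
        push_cast
        first
          | linear_combination -(v2 ^ (k + 1) * v2 ^ l) * ha2
          | linear_combination (v2 ^ (k + 1) * v2 ^ l) * ha2
          | linear_combination (2 * v2 ^ (k + 1) * v2 ^ l) * ha2
          | linear_combination -(2 * v2 ^ (k + 1) * v2 ^ l) * ha2
    | zero =>
      rw [map_zero (brkOp2 Δ₁), AddMonoidHom.zero_apply, map_zero Phi,
        map_zero (brkOp2 Δ₂), AddMonoidHom.zero_apply]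
    | add a b _ _ iha ihb =>
      rw [map_add (brkOp2 Δ₁), AddMonoidHom.add_apply, map_add Phi, iha, ihb, map_add Phi,
        map_add (brkOp2 Δ₂), AddMonoidHom.add_apply]
    | neg a _ iha =>
      rw [map_neg (brkOp2 Δ₁), AddMonoidHom.neg_apply, map_neg Phi, iha, map_neg Phi,
        map_neg (brkOp2 Δ₂), AddMonoidHom.neg_apply]
  | zero =>
    rw [map_zero (brkOp2 Δ₁ α), map_zero Phi, map_zero (brkOp2 Δ₂ (Phi α))]
  | add x y _ _ ihx ihy =>
    rw [map_add (brkOp2 Δ₁ α), map_add Phi, ihx, ihy, map_add Phi, map_add (brkOp2 Δ₂ (Phi α))]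
  | neg x _ ihx =>
    rw [map_neg (brkOp2 Δ₁ α), map_neg Phi, ihx, map_neg Phi, map_neg (brkOp2 Δ₂ (Phi α))]

lemma brk_oo {α β : R1} (hα : α ∈ odd1) (hβ : β ∈ odd1) :
    Phi (brkOp2 Δ₁ α β) = brkOp2 Δ₂ (Phi α) (Phi β) := by
  unfold odd1 at hα hβ
  induction hβ using AddSubgroup.closure_induction with
  | mem w hw =>
    induction hα using AddSubgroup.closure_induction with
    | mem g hg =>
      simp only [brkOp2_apply]
      obtain ⟨k, rfl⟩ := hg
      obtain ⟨l, rfl⟩ := hw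
      rw [mul_tu_tu, map_zero, (hΔ₁ k).2.2, (hΔ₁ l).2.2, Phi_tu, Phi_tu, mul_vb_vb,
        map_zero, map_neg Δ₂, map_neg Δ₂, (hΔ₂ k).2.2, (hΔ₂ l).2.2]
      simp only [zsmul_eq_mul, map_add, map_sub, map_neg, map_mul, mul_zero, zero_mul,
        map_zero, map_intCast, Phi_t_pow, map_pow, Phi_t, Phi_u]
      push_cast
      ring
    | zero =>
      rw [map_zero (brkOp2 Δ₁), AddMonoidHom.zero_apply, map_zero Phi,
        map_zero (brkOp2 Δ₂), AddMonoidHom.zero_apply]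
    | add a b _ _ iha ihb =>
      rw [map_add (brkOp2 Δ₁), AddMonoidHom.add_apply, map_add Phi, iha, ihb, map_add Phi,
        map_add (brkOp2 Δ₂), AddMonoidHom.add_apply]
    | neg a _ iha =>
      rw [map_neg (brkOp2 Δ₁), AddMonoidHom.neg_apply, map_neg Phi, iha, map_neg Phi,
        map_neg (brkOp2 Δ₂), AddMonoidHom.neg_apply]
  | zero =>
    rw [map_zero (brkOp2 Δ₁ α), map_zero Phi, map_zero (brkOp2 Δ₂ (Phi α))]
  | add x y _ _ ihx ihy =>
    rw [map_add (brkOp2 Δ₁ α), map_add Phi, ihx, ihy, map_add Phi, map_add (brkOp2 Δ₂ (Phi α))]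
  | neg x _ ihx =>
    rw [map_neg (brkOp2 Δ₁ α), map_neg Phi, ihx, map_neg Phi, map_neg (brkOp2 Δ₂ (Phi α))]

end brk

/-- the assignment `x ↦ a`, `u ↦ −b`, `t ↦ v` extends to a ring isomorphism
`Φ : R₁ → R₂`, which preserves the parity grading and intertwines the Gerstenhaber
brackets `{α,β}ᵢ = (−1)^{|α|}·Δᵢ(α·β) − (−1)^{|α|}·Δᵢ(α)·β − α·Δᵢ(β)` induced by the
BV-operators `Δ₁` (with `Δ₁(tᵏ) = Δ₁(tᵏx) = 0`, `Δ₁(tᵏu) = −(2k+1)tᵏ`) and `Δ₂` (with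
`Δ₂(vᵏ) = Δ₂(vᵏa) = 0`, `Δ₂(vᵏb) = (2k+1)vᵏ + av^{k+1}`) on parity-homogeneous
elements. -/
theorem stmt17 (Δ₁ : R1 →+ R1) (Δ₂ : R2 →+ R2)
    (hΔ₁ : ∀ k : ℕ, Δ₁ (t1 ^ k) = 0 ∧ Δ₁ (t1 ^ k * x1) = 0 ∧
      Δ₁ (t1 ^ k * u1) = -((2 * (k : ℤ) + 1) • t1 ^ k))
    (hΔ₂ : ∀ k : ℕ, Δ₂ (v2 ^ k) = 0 ∧ Δ₂ (v2 ^ k * a2) = 0 ∧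
      Δ₂ (v2 ^ k * b2) = (2 * (k : ℤ) + 1) • v2 ^ k + a2 * v2 ^ (k + 1)) :
    ∃ Φ : R1 ≃+* R2,
      Φ x1 = a2 ∧ Φ u1 = -b2 ∧ Φ t1 = v2 ∧
      (∀ z ∈ even1, Φ z ∈ even2) ∧ (∀ z ∈ odd1, Φ z ∈ odd2) ∧
      ∀ α β : R1, (β ∈ even1 ∨ β ∈ odd1) →
        (α ∈ even1 →
          Φ (Δ₁ (α * β) - Δ₁ α * β - α * Δ₁ β) =
            Δ₂ (Φ α * Φ β) - Δ₂ (Φ α) * Φ β - Φ α * Δ₂ (Φ β)) ∧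
        (α ∈ odd1 →
          Φ (-Δ₁ (α * β) + Δ₁ α * β - α * Δ₁ β) =
            -Δ₂ (Φ α * Φ β) + Δ₂ (Φ α) * Φ β - Φ α * Δ₂ (Φ β)) := by
  refine ⟨Phi, Phi_x, Phi_u, Phi_t, fun z hz => Phi_even hz, fun z hz => Phi_odd hz,
    fun α β hβ => ⟨fun hα => ?_, fun hα => ?_⟩⟩
  · rcases hβ with hβ | hβ
    · simpa only [brkOp_apply] using brk_ee hΔ₁ hΔ₂ hα hβ
    · simpa only [brkOp_apply] using brk_eo hΔ₁ hΔ₂ hα hβ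
  · rcases hβ with hβ | hβ
    · simpa only [brkOp2_apply] using brk_oe hΔ₁ hΔ₂ hα hβ
    · simpa only [brkOp2_apply] using brk_oo hΔ₁ hΔ₂ hα hβ

end
end
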